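/- For $p \in [1,\infty)$, $d \in \mathbb{N}$, and $\alpha \in (0,d)$, the constant $R(d,p,\alpha) := 2^\alpha \int_{[0,1]^d} \big(\sum_{i=1}^d y_i^p\big)^{-\alpha/p} dy$ satisfies $R(d,p,\alpha) = \frac{2^\alpha p^{-d}}{\Gamma(\alpha/p)} \int_0^\infty t^{(\alpha-d)/p - 1}\, \gamma(1/p, t)^d \, dt$, where $\gamma(1/p,t) = \int_0^t z^{1/p-1} e^{-z} dz$ is the lower incomplete gamma function. -/

import Mathlib

open MeasureTheory Real intervalIntegral Set
open scoped ENNReal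

lemma image_aux {p t : ℝ} (hp : 1 ≤ p) (ht : 0 < t) :
    (fun y : ℝ => t * y ^ p) '' Set.Ioo 0 1 = Set.Ioo 0 t := by
  have hp0 : 0 < p := lt_of_lt_of_le one_pos hp
  ext z
  constructor
  · rintro ⟨y, ⟨hy0, hy1⟩, rfl⟩
    exact ⟨mul_pos ht (rpow_pos_of_pos hy0 _),
      mul_lt_of_lt_one_right ht (rpow_lt_one hy0.le hy1 hp0)⟩
  · rintro ⟨hz0, hzt⟩
    refine ⟨(z / t) ^ (1 / p), ⟨rpow_pos_of_pos (div_pos hz0 ht) _,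
      rpow_lt_one (div_pos hz0 ht).le ((div_lt_one ht).2 hzt) (by positivity)⟩, ?_⟩
    show t * ((z / t) ^ (1/p)) ^ p = z
    rw [← Real.rpow_mul (div_pos hz0 ht).le, one_div_mul_cancel hp0.ne', Real.rpow_one,
      mul_div_cancel₀ _ ht.ne']

lemma subst_aux {p t : ℝ} (hp : 1 ≤ p) (ht : 0 < t) :
    (∫ z in (0:ℝ)..t, z ^ (1 / p - 1) * Real.exp (-z))
      = ∫ y in Set.Ioo (0:ℝ) 1, (p * t ^ (1/p)) * Real.exp (-(t * y ^ p)) := by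
  have hp0 : 0 < p := lt_of_lt_of_le one_pos hp
  have hderiv : ∀ y ∈ Set.Ioo (0:ℝ) 1,
      HasDerivWithinAt (fun y : ℝ => t * y ^ p) (t * (p * y ^ (p - 1))) (Set.Ioo 0 1) y :=
    fun y _ => ((Real.hasDerivAt_rpow_const (Or.inr hp)).const_mul t).hasDerivWithinAt
  have hinj : Set.InjOn (fun y : ℝ => t * y ^ p) (Set.Ioo 0 1) := by
    intro a ha b hb h
    simp only at h
    have h' : a ^ p = b ^ p := by
      exact mul_left_cancel₀ ht.ne' h
    rcases lt_trichotomy a b with hab | hab | hab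
    · exact absurd h' (ne_of_lt (rpow_lt_rpow ha.1.le hab hp0))
    · exact hab
    · exact absurd h'.symm (ne_of_lt (rpow_lt_rpow hb.1.le hab hp0))
  have key := integral_image_eq_integral_abs_deriv_smul measurableSet_Ioo hderiv hinj
    (fun z => z ^ (1 / p - 1) * Real.exp (-z))
  rw [image_aux hp ht] at key
  rw [intervalIntegral.integral_of_le ht.le, MeasureTheory.integral_Ioc_eq_integral_Ioo, key]
  refine setIntegral_congr_fun measurableSet_Ioo (fun y hy => ?_)
  obtain ⟨hy0, hy1⟩ := hy
  have h1 : (t * y ^ p) ^ (1 / p - 1) = t ^ (1/p - 1) * y ^ (1 - p) := by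
    rw [Real.mul_rpow ht.le (rpow_pos_of_pos hy0 p).le, ← Real.rpow_mul hy0.le]
    congr 1
    field_simp
  have e1 : t * t ^ (1/p - 1) = t ^ (1/p) := by
    nth_rewrite 1 [← Real.rpow_one t]
    rw [← Real.rpow_add ht]; norm_num
  have e2 : y ^ (p - 1) * y ^ (1 - p) = 1 := by
    rw [← Real.rpow_add hy0]; norm_num
  have hpos : 0 < t * (p * y ^ (p - 1)) :=
    mul_pos ht (mul_pos hp0 (rpow_pos_of_pos hy0 _))
  show |t * (p * y ^ (p - 1))| • ((t * y ^ p) ^ (1 / p - 1) * Real.exp (-(t * y ^ p)))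
      = p * t ^ (1 / p) * Real.exp (-(t * y ^ p))
  rw [abs_of_pos hpos, smul_eq_mul, h1,
    show t * (p * y ^ (p - 1)) * (t ^ (1/p - 1) * y ^ (1 - p) * Real.exp (-(t * y ^ p)))
      = p * (t * t ^ (1/p - 1)) * (y ^ (p - 1) * y ^ (1 - p) * Real.exp (-(t * y ^ p))) from by
        ring, e1, e2, one_mul]

lemma prod_aux (d : ℕ) {p t : ℝ} (hp0 : 0 < p) :
    ∫ y in Set.Icc (0 : Fin d → ℝ) 1, Real.exp (-(t * ∑ i : Fin d, (y i) ^ p))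
      = (∫ x in Set.Ioo (0:ℝ) 1, Real.exp (-(t * x ^ p))) ^ d := by
  have h1 : ∀ y : Fin d → ℝ,
      (∏ i : Fin d, (Set.Icc (0:ℝ) 1).indicator (fun x => Real.exp (-(t * x ^ p))) (y i))
        = (Set.Icc (0 : Fin d → ℝ) 1).indicator
            (fun y => Real.exp (-(t * ∑ i : Fin d, (y i) ^ p))) y := by
    intro y
    by_cases hy : y ∈ Set.Icc (0 : Fin d → ℝ) 1
    · have hyi : ∀ i, y i ∈ Set.Icc (0:ℝ) 1 := by
        rw [← Set.pi_univ_Icc] at hy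
        exact fun i => hy i (Set.mem_univ i)
      rw [Set.indicator_of_mem hy]
      rw [Finset.prod_congr rfl (fun i _ => Set.indicator_of_mem (hyi i) _)]
      rw [← Real.exp_sum]
      congr 1
      rw [Finset.mul_sum]
      simp
    · rw [Set.indicator_of_notMem hy]
      rw [← Set.pi_univ_Icc, Set.mem_univ_pi] at hy
      push_neg at hy
      obtain ⟨i, hi⟩ := hy
      exact Finset.prod_eq_zero (Finset.mem_univ i) (Set.indicator_of_notMem hi _)
  calc ∫ y in Set.Icc (0 : Fin d → ℝ) 1, Real.exp (-(t * ∑ i : Fin d, (y i) ^ p))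
      = ∫ y : Fin d → ℝ, (Set.Icc (0 : Fin d → ℝ) 1).indicator
          (fun y => Real.exp (-(t * ∑ i : Fin d, (y i) ^ p))) y := by
        rw [MeasureTheory.integral_indicator measurableSet_Icc]
    _ = ∫ y : Fin d → ℝ, ∏ i : Fin d,
          (Set.Icc (0:ℝ) 1).indicator (fun x => Real.exp (-(t * x ^ p))) (y i) := by
        simp_rw [h1]
    _ = (∫ x : ℝ, (Set.Icc (0:ℝ) 1).indicator (fun x => Real.exp (-(t * x ^ p))) x) ^ d := by
        have h2 : (∫ y : Fin d → ℝ, ∏ i : Fin d,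
            (Set.Icc (0:ℝ) 1).indicator (fun x => Real.exp (-(t * x ^ p))) (y i)
              ∂(Measure.pi fun _ => volume)) =
            (∫ x : ℝ, (Set.Icc (0:ℝ) 1).indicator (fun x => Real.exp (-(t * x ^ p))) x)
              ^ Fintype.card (Fin d) :=
          MeasureTheory.integral_fintype_prod_eq_pow _
        rw [← MeasureTheory.volume_pi, Fintype.card_fin] at h2
        exact h2
    _ = (∫ x in Set.Ioo (0:ℝ) 1, Real.exp (-(t * x ^ p))) ^ d := by
        rw [MeasureTheory.integral_indicator measurableSet_Icc, MeasureTheory.integral_Icc_eq_integral_Ioo]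

lemma gamma_cont {p : ℝ} (hp : 1 ≤ p) :
    Continuous (fun t : ℝ => ∫ z in (0:ℝ)..t, z ^ (1 / p - 1) * Real.exp (-z)) := by
  have hp0 : 0 < p := lt_of_lt_of_le one_pos hp
  have hr : (-1 : ℝ) < 1 / p - 1 := by
    have : 0 < 1 / p := by positivity
    linarith
  exact intervalIntegral.continuous_primitive
    (fun a b => (intervalIntegral.intervalIntegrable_rpow' hr).mul_continuousOn
      (Continuous.continuousOn (by continuity))) 0

lemma gamma_nonneg {p : ℝ} (hp : 1 ≤ p) {t : ℝ} (ht : 0 ≤ t) :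
    0 ≤ ∫ z in (0:ℝ)..t, z ^ (1 / p - 1) * Real.exp (-z) := by
  apply intervalIntegral.integral_nonneg ht
  intro x hx
  exact mul_nonneg (Real.rpow_nonneg hx.1 _) (Real.exp_nonneg _)

lemma gamma_scaled_integrable {s a : ℝ} (hs : 0 < s) (ha : 0 < a) :
    IntegrableOn (fun x : ℝ => x ^ (s - 1) * Real.exp (-(a * x))) (Set.Ioi 0) := by
  have := integrableOn_rpow_mul_exp_neg_mul_rpow (p := 1) (s := s - 1) (b := a)
    (by linarith) one_pos ha
  simpa [Real.rpow_one, neg_mul] using this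

/-- For `p ∈ [1,∞)`, `d ≥ 1` and `α ∈ (0,d)`, the constant
`R(d,p,α) = 2^α ∫_{[0,1]^d} (∑ y_i^p)^{-α/p} dy` equals
`(2^α p^{-d} / Γ(α/p)) ∫_0^∞ t^{(α-d)/p - 1} γ(1/p,t)^d dt`,
where `γ(1/p,t) = ∫_0^t z^{1/p-1} e^{-z} dz` is the lower incomplete gamma
function. -/
theorem R_const_incomplete_gamma (d : ℕ) (hd : 0 < d) (p α : ℝ)
    (hp : 1 ≤ p) (hα : 0 < α) (hαd : α < d) :
    (2 : ℝ) ^ α *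
        ∫ y in Set.Icc (0 : Fin d → ℝ) 1, (∑ i : Fin d, (y i) ^ p) ^ (-(α / p)) =
      ((2 : ℝ) ^ α * p ^ (-(d : ℝ)) / Real.Gamma (α / p)) *
        ∫ t in Set.Ioi (0 : ℝ), t ^ ((α - d) / p - 1) *
          (∫ z in (0:ℝ)..t, z ^ (1 / p - 1) * Real.exp (-z)) ^ d := by
  haveI : Nonempty (Fin d) := ⟨⟨0, hd⟩⟩
  have hp0 : 0 < p := lt_of_lt_of_le one_pos hp
  have hs0 : 0 < α / p := div_pos hα hp0
  have hΓ : 0 < Real.Gamma (α / p) := Real.Gamma_pos_of_pos hs0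
  set γ : ℝ → ℝ := fun t => ∫ z in (0:ℝ)..t, z ^ (1 / p - 1) * Real.exp (-z) with hγ
  set A : (Fin d → ℝ) → ℝ := fun y => ∑ i : Fin d, (y i) ^ p with hA
  set L : ℝ≥0∞ := ∫⁻ y in Set.Icc (0 : Fin d → ℝ) 1, ENNReal.ofReal ((A y) ^ (-(α / p))) with hL
  set M : ℝ≥0∞ := ∫⁻ t in Set.Ioi (0:ℝ),
      ENNReal.ofReal (t ^ ((α - d) / p - 1) * (γ t) ^ d) with hM
  have hAmeas : Measurable A := by
    apply Finset.measurable_sum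
    intro i _
    exact (measurable_pi_apply i).pow measurable_const
  have hI : (∫ y in Set.Icc (0 : Fin d → ℝ) 1, (A y) ^ (-(α / p))) = L.toReal := by
    rw [hL, MeasureTheory.integral_eq_lintegral_of_nonneg_ae]
    · filter_upwards [ae_restrict_mem measurableSet_Icc] with y hy
      exact Real.rpow_nonneg (Finset.sum_nonneg fun i _ => Real.rpow_nonneg (hy.1 i) _) _
    · exact (hAmeas.pow measurable_const).aestronglyMeasurable
  have hJ : (∫ t in Set.Ioi (0:ℝ), t ^ ((α - d) / p - 1) * (γ t) ^ d) = M.toReal := by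
    rw [hM, MeasureTheory.integral_eq_lintegral_of_nonneg_ae]
    · filter_upwards [ae_restrict_mem measurableSet_Ioi] with t ht
      exact mul_nonneg (Real.rpow_nonneg (le_of_lt ht) _)
        (pow_nonneg (gamma_nonneg hp (le_of_lt ht)) d)
    · exact ((measurable_id.pow measurable_const).mul
        (((gamma_cont hp).measurable).pow_const d)).aestronglyMeasurable
  have hApos : ∀ᵐ y ∂(volume.restrict (Set.Icc (0 : Fin d → ℝ) 1)), 0 < A y := by
    rw [ae_restrict_iff' measurableSet_Icc, ae_iff]
    refine measure_mono_null (fun y hy => ?_) (measure_singleton (0 : Fin d → ℝ))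
    simp only [Set.mem_setOf_eq, not_forall] at hy
    push_neg at hy
    obtain ⟨hyIcc, hyA⟩ := hy
    have hnn : ∀ i ∈ Finset.univ, 0 ≤ (y i) ^ p := fun i _ => Real.rpow_nonneg (hyIcc.1 i) _
    have hzero : A y = 0 := le_antisymm hyA (Finset.sum_nonneg hnn)
    have hz : ∀ i, y i = 0 := by
      intro i
      have h1 := (Finset.sum_eq_zero_iff_of_nonneg hnn).1 hzero i (Finset.mem_univ i)
      exact (Real.rpow_eq_zero (hyIcc.1 i) hp0.ne').1 h1
    exact Set.mem_singleton_iff.2 (funext hz)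
  have hy_ae : ∀ᵐ y ∂(volume.restrict (Set.Icc (0 : Fin d → ℝ) 1)),
      (∫⁻ t in Set.Ioi (0:ℝ), ENNReal.ofReal (t ^ (α/p - 1) * Real.exp (-(A y * t))))
        = ENNReal.ofReal (Real.Gamma (α / p)) * ENNReal.ofReal ((A y) ^ (-(α / p))) := by
    filter_upwards [hApos] with y hAy
    rw [← MeasureTheory.ofReal_integral_eq_lintegral_ofReal
        (gamma_scaled_integrable hs0 hAy)
        (by filter_upwards [ae_restrict_mem measurableSet_Ioi] with t ht using
          mul_nonneg (Real.rpow_nonneg ht.le _) (Real.exp_nonneg _)),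
      Real.integral_rpow_mul_exp_neg_mul_Ioi hs0 hAy]
    rw [one_div, Real.inv_rpow hAy.le, ← Real.rpow_neg hAy.le,
      ENNReal.ofReal_mul (Real.rpow_nonneg hAy.le _), mul_comm]
  have hAcont : Continuous A := by
    apply continuous_finset_sum
    intro i _
    exact (Real.continuous_rpow_const hp0.le).comp (continuous_apply i)
  have swap_meas : Measurable (fun q : (Fin d → ℝ) × ℝ =>
      ENNReal.ofReal (q.2 ^ (α/p - 1) * Real.exp (-(A q.1 * q.2)))) :=
    ((measurable_snd.pow measurable_const).mul
      (((hAmeas.comp measurable_fst).mul measurable_snd).neg.exp)).ennreal_ofReal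
  -- inner identity for fixed t > 0
  have inner_eq : ∀ t : ℝ, 0 < t →
      (∫⁻ y in Set.Icc (0 : Fin d → ℝ) 1,
        ENNReal.ofReal (t ^ (α/p - 1) * Real.exp (-(A y * t))))
      = ENNReal.ofReal (p ^ (-(d:ℝ)) * (t ^ ((α - d) / p - 1) * (γ t) ^ d)) := by
    intro t ht
    have hPT : (0:ℝ) < p * t ^ (1/p) := by positivity
    have hint : IntegrableOn (fun y => Real.exp (-(A y * t)))
        (Set.Icc (0 : Fin d → ℝ) 1) :=
      (((hAcont.mul continuous_const).neg).rexp).continuousOn.integrableOn_compact isCompact_Icc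
    have hIoo : (∫ x in Set.Ioo (0:ℝ) 1, Real.exp (-(t * x ^ p)))
        = (p * t ^ (1/p))⁻¹ * γ t := by
      have h1 : γ t = (p * t ^ (1/p)) * ∫ x in Set.Ioo (0:ℝ) 1, Real.exp (-(t * x ^ p)) := by
        simp only [hγ]
        rw [subst_aux hp ht, MeasureTheory.integral_const_mul]
      rw [h1]
      field_simp
    have hre : (∫ y in Set.Icc (0 : Fin d → ℝ) 1, Real.exp (-(A y * t)))
        = ((p * t ^ (1/p))⁻¹ * γ t) ^ d := by
      have : (fun y : Fin d → ℝ => Real.exp (-(A y * t)))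
          = fun y => Real.exp (-(t * A y)) := by
        funext y; rw [mul_comm]
      rw [this, hA]
      rw [prod_aux d hp0, hIoo]
    have scal : t ^ (α/p - 1) * (((p * t ^ (1/p))⁻¹ * γ t) ^ d)
        = p ^ (-(d:ℝ)) * (t ^ ((α - d) / p - 1) * (γ t) ^ d) := by
      have hd2 : (t ^ (1/p)) ^ (d:ℕ) = t ^ ((d:ℝ)/p) := by
        rw [← Real.rpow_natCast (t ^ (1/p)) d, ← Real.rpow_mul ht.le]
        congr 1
        field_simp
      have hd3 : (p:ℝ) ^ (-(d:ℝ)) = ((p:ℝ) ^ (d:ℕ))⁻¹ := by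
        rw [Real.rpow_neg hp0.le, Real.rpow_natCast]
      have hd4 : t ^ ((α - d)/p - 1) = t ^ (α/p - 1) * (t ^ ((d:ℝ)/p))⁻¹ := by
        rw [← Real.rpow_neg ht.le, ← Real.rpow_add ht]
        congr 1
        field_simp
        ring
      rw [mul_pow, mul_inv, mul_pow, inv_pow, inv_pow, hd2, hd3, hd4]
      ring
    calc (∫⁻ y in Set.Icc (0 : Fin d → ℝ) 1,
          ENNReal.ofReal (t ^ (α/p - 1) * Real.exp (-(A y * t))))
        = ∫⁻ y in Set.Icc (0 : Fin d → ℝ) 1,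
            ENNReal.ofReal (t ^ (α/p - 1)) * ENNReal.ofReal (Real.exp (-(A y * t))) := by
          simp_rw [ENNReal.ofReal_mul (Real.rpow_nonneg ht.le _)]
      _ = ENNReal.ofReal (t ^ (α/p - 1)) *
            ∫⁻ y in Set.Icc (0 : Fin d → ℝ) 1, ENNReal.ofReal (Real.exp (-(A y * t))) :=
          lintegral_const_mul' _ _ ENNReal.ofReal_ne_top
      _ = ENNReal.ofReal (t ^ (α/p - 1)) *
            ENNReal.ofReal (∫ y in Set.Icc (0 : Fin d → ℝ) 1, Real.exp (-(A y * t))) := by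
          rw [MeasureTheory.ofReal_integral_eq_lintegral_ofReal hint
            (Filter.Eventually.of_forall fun y => (Real.exp_nonneg _))]
      _ = ENNReal.ofReal (t ^ (α/p - 1) * (((p * t ^ (1/p))⁻¹ * γ t) ^ d)) := by
          rw [hre, ← ENNReal.ofReal_mul (Real.rpow_nonneg ht.le _)]
      _ = ENNReal.ofReal (p ^ (-(d:ℝ)) * (t ^ ((α - d) / p - 1) * (γ t) ^ d)) := by
          rw [scal]
  have key : ENNReal.ofReal (Real.Gamma (α / p)) * L = ENNReal.ofReal (p ^ (-(d:ℝ))) * M := by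
    calc ENNReal.ofReal (Real.Gamma (α / p)) * L
        = ∫⁻ y in Set.Icc (0 : Fin d → ℝ) 1,
            ENNReal.ofReal (Real.Gamma (α / p)) * ENNReal.ofReal ((A y) ^ (-(α / p))) :=
          (lintegral_const_mul' _ _ ENNReal.ofReal_ne_top).symm
      _ = ∫⁻ y in Set.Icc (0 : Fin d → ℝ) 1, ∫⁻ t in Set.Ioi (0:ℝ),
            ENNReal.ofReal (t ^ (α/p - 1) * Real.exp (-(A y * t))) :=
          (lintegral_congr_ae hy_ae).symm
      _ = ∫⁻ t in Set.Ioi (0:ℝ), ∫⁻ y in Set.Icc (0 : Fin d → ℝ) 1,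
            ENNReal.ofReal (t ^ (α/p - 1) * Real.exp (-(A y * t))) :=
          lintegral_lintegral_swap swap_meas.aemeasurable
      _ = ∫⁻ t in Set.Ioi (0:ℝ),
            ENNReal.ofReal (p ^ (-(d:ℝ)) * (t ^ ((α - d) / p - 1) * (γ t) ^ d)) :=
          setLIntegral_congr_fun measurableSet_Ioi
            (fun t ht => inner_eq t ht)
      _ = ENNReal.ofReal (p ^ (-(d:ℝ))) * M := by
          simp_rw [ENNReal.ofReal_mul (Real.rpow_nonneg hp0.le (-(d:ℝ)))]
          exact lintegral_const_mul' _ _ ENNReal.ofReal_ne_top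
  -- conclude
  have goal_eq : (2 : ℝ) ^ α * L.toReal
      = ((2 : ℝ) ^ α * p ^ (-(d : ℝ)) / Real.Gamma (α / p)) * M.toReal := by
    by_cases hLtop : L = ⊤
    · have hMtop : M = ⊤ := by
        by_contra hM
        have : ENNReal.ofReal (p ^ (-(d:ℝ))) * M ≠ ⊤ :=
          ENNReal.mul_ne_top ENNReal.ofReal_ne_top hM
        rw [← key, hLtop, ENNReal.mul_top (by
          simp only [ne_eq, ENNReal.ofReal_eq_zero, not_le]
          exact hΓ)] at this
        exact this rfl
      rw [hLtop, hMtop]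
      simp
    · have hMtop : M ≠ ⊤ := by
        intro hM
        rw [hM, ENNReal.mul_top (by
          simp only [ne_eq, ENNReal.ofReal_eq_zero, not_le]
          positivity)] at key
        exact hLtop ((ENNReal.mul_eq_top.1 key).elim
          (fun h => h.2) (fun h => absurd h.1 ENNReal.ofReal_ne_top))
      have := congrArg ENNReal.toReal key
      rw [ENNReal.toReal_mul, ENNReal.toReal_mul, ENNReal.toReal_ofReal hΓ.le,
        ENNReal.toReal_ofReal (Real.rpow_nonneg hp0.le _)] at this
      have hx : L.toReal = p ^ (-(d:ℝ)) * M.toReal / Real.Gamma (α / p) := by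
        field_simp
        linarith [this]
      rw [hx]
      field_simp
  rw [show (∫ y in Set.Icc (0 : Fin d → ℝ) 1, (∑ i : Fin d, (y i) ^ p) ^ (-(α / p)))
      = ∫ y in Set.Icc (0 : Fin d → ℝ) 1, (A y) ^ (-(α / p)) from rfl, hI]
  rw [show (∫ t in Set.Ioi (0 : ℝ), t ^ ((α - d) / p - 1) *
        (∫ z in (0:ℝ)..t, z ^ (1 / p - 1) * Real.exp (-z)) ^ d)
      = ∫ t in Set.Ioi (0:ℝ), t ^ ((α - d) / p - 1) * (γ t) ^ d from rfl, hJ]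
  exact goal_eq
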